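/- The locally convex cones (Q_j, V) for each j ∈ ℕ, and (P, V), are barreled: for every barrel B and every element b there exist v ∈ V and λ > 0 such that (a,b) ∈ λB for all a in the symmetric neighborhood v(b)v. -/

import Mathlib

open scoped NNReal ENNReal

/-- The positive reals, used for the values `a` in elements `a_i`. -/
abbrev Rpos := {a : ℝ // 0 < a}

/-- The cone `P = {a_i : a ∈ (0,∞), i ∈ ℕ} ∪ {0₀, ∞_∞}`. -/
inductive CP : Type where
  | zero : CP
  | inf : CP
  | elt : Rpos → ℕ+ → CP

namespace CP

/-- Addition on `P`. -/
def add : CP → CP → CP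
  | zero, x => x
  | x, zero => x
  | inf, _ => inf
  | _, inf => inf
  | elt a i, elt b j =>
      if i = j then elt ⟨a.1 + b.1, add_pos a.2 b.2⟩ i else inf

/-- Scalar multiplication by nonnegative reals on `P`. -/
noncomputable def smul (r : ℝ≥0) (x : CP) : CP :=
  if h : r = 0 then zero
  else
    match x with
    | zero => zero
    | inf => inf
    | elt a i => elt ⟨(r : ℝ) * a.1,
        mul_pos (by exact_mod_cast pos_iff_ne_zero.mpr h) a.2⟩ i

/-- The preorder on `P`: `a_i ⪯ b_j` iff `i = j` and `a ≤ b`. -/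
def le : CP → CP → Prop
  | zero, zero => True
  | inf, inf => True
  | elt a i, elt b j => i = j ∧ a.1 ≤ b.1
  | _, _ => False

/-- The neighborhood relation: `nrel v x y` means `x ⪯ y + v`. -/
def nrel (v : ℝ) : CP → CP → Prop
  | zero, _ => True
  | _, inf => True
  | elt a i, elt b j => i = j ∧ a.1 ≤ b.1 + (i : ℝ) * v
  | _, _ => False

/-- The subcone `Q_j = {b_j : b ∈ (0,∞)} ∪ {0₀, ∞_∞}`. -/
def Q (j : ℕ+) : Set CP := {x | x = zero ∨ x = inf ∨ ∃ a : Rpos, x = elt a j}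

/-- Symmetric neighborhood of `b` relative to the subcone `Qs`. -/
def symN (Qs : Set CP) (v : ℝ) (b : CP) : Set CP :=
  {a ∈ Qs | nrel v a b ∧ nrel v b a}

/-- Linearity of a functional `μ : P → ℝ ∪ {+∞}` relative to a subcone. -/
def IsLinearOn (Qs : Set CP) (μ : CP → EReal) : Prop :=
  μ zero = 0 ∧ (∀ x, μ x ≠ ⊥) ∧
  (∀ x ∈ Qs, ∀ y ∈ Qs, μ (add x y) = μ x + μ y) ∧
  (∀ r : ℝ≥0, ∀ x ∈ Qs, μ (smul r x) = ((r : ℝ) : EReal) * μ x)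

/-- (Uniform) continuity of a functional relative to a subcone. -/
def IsContOn (Qs : Set CP) (μ : CP → EReal) : Prop :=
  ∃ v : ℝ, 0 < v ∧ ∀ x ∈ Qs, ∀ y ∈ Qs, nrel v x y → μ x ≤ μ y + 1

/-- Membership in the dual cone of the subcone `Qs`. -/
def InDualOn (Qs : Set CP) (μ : CP → EReal) : Prop :=
  IsLinearOn Qs μ ∧ IsContOn Qs μ

/-- `λ B = {(λx, λy) : (x,y) ∈ B}`. -/
def scaleSet (l : ℝ≥0) (B : Set (CP × CP)) : Set (CP × CP) :=
  (fun p => (smul l p.1, smul l p.2)) '' B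

/-- `B` is a barrel in the subcone `Qs`. -/
def IsBarrelOn (Qs : Set CP) (B : Set (CP × CP)) : Prop :=
  (∀ p ∈ B, p.1 ∈ Qs ∧ p.2 ∈ Qs) ∧
  (∀ p ∈ B, ∀ q ∈ B, ∀ t : ℝ≥0, t ≤ 1 →
     (add (smul t p.1) (smul (1 - t) q.1),
      add (smul t p.2) (smul (1 - t) q.2)) ∈ B) ∧
  (∀ b ∈ Qs, ∃ v : ℝ, 0 < v ∧ ∀ a ∈ symN Qs v b,
     ∃ l : ℝ≥0, 0 < l ∧ (a, b) ∈ scaleSet l B) ∧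
  (∀ a ∈ Qs, ∀ b ∈ Qs, (a, b) ∉ B → ∃ μ : CP → EReal, InDualOn Qs μ ∧
     μ b + 1 < μ a ∧ ∀ p ∈ B, μ p.1 ≤ μ p.2 + 1)

/-- The subcone `Qs` is barreled. -/
def BarreledOn (Qs : Set CP) : Prop :=
  ∀ B, IsBarrelOn Qs B → ∀ b ∈ Qs, ∃ v : ℝ, 0 < v ∧ ∃ l : ℝ≥0, 0 < l ∧
    ∀ a ∈ symN Qs v b, (a, b) ∈ scaleSet l B

/-- The subcone `Qs` is upper-barreled. -/
def UpperBarreledOn (Qs : Set CP) : Prop :=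
  ∀ B, IsBarrelOn Qs B → ∃ v : ℝ, 0 < v ∧
    ∀ p : CP × CP, p.1 ∈ Qs → p.2 ∈ Qs → nrel v p.1 p.2 → p ∈ B

/-- The functional `∞̄` (resp. its extension `∞̄~`). -/
noncomputable def fnBarInf : CP → EReal
  | zero => 0
  | _ => ⊤

/-- The functional `0̄_k` (resp. its extension). -/
noncomputable def fnBarZero (k : ℕ+) : CP → EReal
  | zero => 0
  | inf => ⊤
  | elt _ i => if i = k then 0 else ⊤

/-- The functional `c_k : a_k ↦ c·a` (extended by `+∞` off `Q_k`). -/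
noncomputable def fnLam (c : ℝ) (k : ℕ+) : CP → EReal
  | zero => 0
  | inf => ⊤
  | elt a i => if i = k then ((c * a.1 : ℝ) : EReal) else ⊤

/-- The zero functional. -/
noncomputable def fnZero : CP → EReal := fun _ => 0

/-- The barrel `B_j = {(x,y) ∈ Q_j² : x ⪯ y + w/j}`. -/
def Bset (w : ℝ) (j : ℕ+) : Set (CP × CP) :=
  {p | p.1 ∈ Q j ∧ p.2 ∈ Q j ∧ nrel (w / (j : ℝ)) p.1 p.2}

/-- The barrel `B = ⋃_j B_j`. -/
def BigB (w : ℝ) : Set (CP × CP) := ⋃ (j : ℕ+), Bset w j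

/-- The map `Λ : Q_j → [0,∞]`, `a_j ↦ a/j`. -/
noncomputable def Lam (j : ℕ+) : CP → ℝ≥0∞
  | zero => 0
  | inf => ⊤
  | elt a _ => ENNReal.ofReal (a.1 / (j : ℝ))


/-! ### Auxiliary lemmas for Statement 13 -/

lemma aux_smul_elt (r : ℝ≥0) (hr : r ≠ 0) (a : Rpos) (i : ℕ+) :
    smul r (elt a i) = elt ⟨(r : ℝ) * a.1,
      mul_pos (by exact_mod_cast pos_iff_ne_zero.mpr hr) a.2⟩ i := by
  simp [smul, hr]

lemma aux_smul_zero (r : ℝ≥0) : smul r zero = zero := by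
  by_cases hr : r = 0 <;> simp [smul, hr]

lemma aux_smul_inf (r : ℝ≥0) (hr : r ≠ 0) : smul r inf = inf := by
  simp [smul, hr]

lemma aux_smul_smul_inv (l : ℝ≥0) (hl : l ≠ 0) (x : CP) :
    smul l (smul l⁻¹ x) = x := by
  have hl' : l⁻¹ ≠ 0 := inv_ne_zero hl
  cases x with
  | zero => simp [smul, hl, hl']
  | inf => simp [smul, hl, hl']
  | elt a i =>
      rw [aux_smul_elt _ hl', aux_smul_elt _ hl]
      congr 1
      ext
      push_cast
      field_simp

lemma aux_smul_inv_smul (l : ℝ≥0) (hl : l ≠ 0) (x : CP) :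
    smul l⁻¹ (smul l x) = x := by
  have := aux_smul_smul_inv l⁻¹ (inv_ne_zero hl) x
  rwa [inv_inv] at this

lemma aux_le_nrel {v : ℝ} (hv : 0 < v) {x y : CP} (h : le x y) : nrel v x y := by
  cases x with
  | zero => simp [nrel]
  | inf => cases y <;> simp_all [le, nrel]
  | elt a i =>
      cases y with
      | zero => simp_all [le]
      | inf => simp [nrel]
      | elt b j =>
          obtain ⟨rfl, hab⟩ := h
          refine ⟨rfl, hab.trans ?_⟩
          have : 0 < (i : ℝ) * v := by positivity
          linarith

lemma aux_le_smul (r : ℝ≥0) {x y : CP} (h : le x y) : le (smul r x) (smul r y) := by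
  by_cases hr : r = 0
  · subst hr; simp [smul, le]
  · cases x with
    | zero =>
        cases y with
        | zero => simp [aux_smul_zero, le]
        | inf => simp_all [le]
        | elt b j => simp_all [le]
    | inf =>
        cases y with
        | zero => simp_all [le]
        | inf => simp [aux_smul_inf _ hr, le]
        | elt b j => simp_all [le]
    | elt a i =>
        cases y with
        | zero => simp_all [le]
        | inf => simp_all [le]
        | elt b j =>
            obtain ⟨rfl, hab⟩ := h
            rw [aux_smul_elt _ hr, aux_smul_elt _ hr]
            refine ⟨rfl, ?_⟩
            have : (0:ℝ) ≤ (r:ℝ) := r.2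
            exact mul_le_mul_of_nonneg_left hab this

/-- Continuous linear functionals are monotone with respect to `le`. -/
lemma aux_mono {Qs : Set CP} (hQ : ∀ r : ℝ≥0, ∀ x ∈ Qs, smul r x ∈ Qs)
    {μ : CP → EReal} (hμ : InDualOn Qs μ) {x y : CP} (hx : x ∈ Qs) (hy : y ∈ Qs)
    (hxy : le x y) : μ x ≤ μ y := by
  obtain ⟨⟨hz, hbot, hadd, hsm⟩, w, hw, hcont⟩ := hμ
  have key : ∀ n : ℕ, ((n : ℝ) : EReal) * μ x ≤ ((n : ℝ) : EReal) * μ y + 1 := by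
    intro n
    have h1 := hcont _ (hQ (n : ℝ≥0) x hx) _ (hQ (n : ℝ≥0) y hy)
      (aux_le_nrel hw (aux_le_smul (n : ℝ≥0) hxy))
    rw [hsm (n : ℝ≥0) x hx, hsm (n : ℝ≥0) y hy] at h1
    simpa using h1
  by_cases hyt : μ y = ⊤
  · simp [hyt]
  · obtain ⟨c, hc⟩ : ∃ c : ℝ, μ y = (c : EReal) :=
      ⟨(μ y).toReal, (EReal.coe_toReal hyt (hbot y)).symm⟩
    by_cases hxt : μ x = ⊤
    · exfalso
      have h1 := key 1
      rw [hxt, hc] at h1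
      simp only [Nat.cast_one, EReal.coe_one, one_mul] at h1
      have : ((c : EReal) + 1) < ⊤ := by
        rw [show ((c:EReal) + 1) = ((c + 1 : ℝ) : EReal) by norm_cast]
        exact EReal.coe_lt_top _
      exact absurd h1 (not_le.mpr this)
    · obtain ⟨d, hd⟩ : ∃ d : ℝ, μ x = (d : EReal) :=
        ⟨(μ x).toReal, (EReal.coe_toReal hxt (hbot x)).symm⟩
      rw [hc, hd]
      rw [EReal.coe_le_coe_iff]
      by_contra hdc
      push_neg at hdc
      obtain ⟨n, hn⟩ := exists_nat_gt (1 / (d - c))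
      have h1 := key n
      rw [hc, hd] at h1
      have h2 : (n : ℝ) * d ≤ (n : ℝ) * c + 1 := by
        have : (((n : ℝ) * d : ℝ) : EReal) ≤ (((n : ℝ) * c + 1 : ℝ) : EReal) := by
          push_cast
          convert h1 using 2 <;> norm_cast
        exact_mod_cast this
      have hdcpos : 0 < d - c := by linarith
      have : 1 / (d - c) * (d - c) < (n : ℝ) * (d - c) :=
        mul_lt_mul_of_pos_right hn hdcpos
      rw [one_div_mul_cancel (ne_of_gt hdcpos)] at this
      nlinarith

/-- A barrel is downward closed in its first coordinate. -/
lemma aux_down {Qs : Set CP} (hQ : ∀ r : ℝ≥0, ∀ x ∈ Qs, smul r x ∈ Qs)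
    {B : Set (CP × CP)} (hB : IsBarrelOn Qs B) {x y x' : CP}
    (hxy : (x, y) ∈ B) (hx' : x' ∈ Qs) (h : le x' x) : (x', y) ∈ B := by
  by_contra hn
  obtain ⟨hsub, _, _, hsep⟩ := hB
  obtain ⟨hxQ, hyQ⟩ := hsub _ hxy
  obtain ⟨μ, hμ, hlt, hball⟩ := hsep x' hx' y hyQ hn
  have h1 : μ x' ≤ μ x := aux_mono hQ hμ hx' hxQ h
  have h2 : μ x ≤ μ y + 1 := hball _ hxy
  exact absurd (h1.trans h2) (not_le.mpr hlt)

lemma aux_barreled {Qs : Set CP} (hQ : ∀ r : ℝ≥0, ∀ x ∈ Qs, smul r x ∈ Qs)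
    (hfib : ∀ (a : Rpos) (i : ℕ+), elt a i ∈ Qs → ∀ a' : Rpos, elt a' i ∈ Qs) :
    BarreledOn Qs := by
  intro B hB b hb
  obtain ⟨v, hv, hloc⟩ := hB.2.2.1 b hb
  cases b with
  | zero =>
      have hzN : zero ∈ symN Qs v zero := ⟨hb, trivial, trivial⟩
      obtain ⟨l, hl, hmem⟩ := hloc zero hzN
      refine ⟨v, hv, l, hl, fun a ha => ?_⟩
      obtain ⟨_, h1, _⟩ := ha
      have : a = zero := by cases a <;> simp_all [nrel]
      rwa [this]
  | inf =>
      have hzN : inf ∈ symN Qs v inf := ⟨hb, trivial, trivial⟩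
      obtain ⟨l, hl, hmem⟩ := hloc inf hzN
      refine ⟨v, hv, l, hl, fun a ha => ?_⟩
      obtain ⟨_, _, h2⟩ := ha
      have : a = inf := by cases a <;> simp_all [nrel]
      rwa [this]
  | elt b0 j =>
      have hjv : (0:ℝ) < (j : ℝ) * v := mul_pos (by exact_mod_cast j.pos) hv
      set e : CP := elt ⟨b0.1 + (j : ℝ) * v, add_pos b0.2 hjv⟩ j with he
      have heQ : e ∈ Qs := hfib b0 j hb _
      have heN : e ∈ symN Qs v (elt b0 j) := by
        refine ⟨heQ, ⟨rfl, le_refl _⟩, ⟨rfl, by dsimp; linarith⟩⟩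
      obtain ⟨l, hl, p, hpB, hpe⟩ := hloc e heN
      have hl' : l ≠ 0 := ne_of_gt hl
      refine ⟨v, hv, l, hl, fun a ha => ?_⟩
      obtain ⟨haQ, h1, h2⟩ := ha
      obtain ⟨a0, ha0⟩ : ∃ a0 : Rpos, a = elt a0 j := by
        cases a with
        | zero => exact absurd h2 (by simp [nrel])
        | inf => exact absurd h1 (by simp [nrel])
        | elt a0 i =>
            obtain ⟨rfl, _⟩ := h1
            exact ⟨a0, rfl⟩
      subst ha0
      have hale : le (elt a0 j) e := ⟨rfl, h1.2⟩
      have hp1 : p.1 = smul l⁻¹ e := by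
        have := congrArg (smul l⁻¹) (congrArg Prod.fst hpe)
        simpa [aux_smul_inv_smul l hl'] using this
      have hinB : (smul l⁻¹ (elt a0 j), p.2) ∈ B := by
        have hle' : le (smul l⁻¹ (elt a0 j)) p.1 := by
          rw [hp1]; exact aux_le_smul l⁻¹ hale
        exact aux_down hQ hB (by simpa using hpB) (hQ l⁻¹ _ haQ) hle'
      refine ⟨(smul l⁻¹ (elt a0 j), p.2), hinB, ?_⟩
      have h2' := congrArg Prod.snd hpe
      simp only [Prod.mk.injEq]
      exact ⟨aux_smul_smul_inv l hl' _, h2'⟩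

/-- the locally convex cones `(Q_j, V)` (for every `j ∈ ℕ`) and
`(P, V)` are barreled. -/
theorem stmt13 : (∀ j : ℕ+, BarreledOn (Q j)) ∧ BarreledOn Set.univ := by
  constructor
  · intro j
    refine aux_barreled ?_ ?_
    · intro r x hx
      rcases hx with rfl | rfl | ⟨a, rfl⟩
      · exact Or.inl (aux_smul_zero r)
      · by_cases hr : r = 0
        · subst hr; exact Or.inl (by simp [smul])
        · exact Or.inr (Or.inl (aux_smul_inf r hr))
      · by_cases hr : r = 0
        · subst hr; exact Or.inl (by simp [smul])
        · exact Or.inr (Or.inr ⟨_, aux_smul_elt r hr a j⟩)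
    · intro a i hx a'
      rcases hx with h | h | ⟨c, hc⟩
      · exact absurd h (by simp)
      · exact absurd h (by simp)
      · have hij : i = j := by injection hc with h1 h2
        subst hij
        exact Or.inr (Or.inr ⟨a', rfl⟩)
  · exact aux_barreled (fun _ _ _ => trivial) (fun _ _ _ _ => trivial)

end CP
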